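/- There exists a constant C > 0 such that for all y₁, y₂ in the open unit disk D, ∫_D |K_D(y₁,z) − K_D(y₂,z)| dz ≤ C h(|y₁ − y₂|), where the integral is with respect to two-dimensional Lebesgue measure. -/

import Mathlib

open MeasureTheory

/-- The inverse point of `z` with respect to the unit circle: `z* = z / |z|²`. -/
noncomputable def starInv (z : ℂ) : ℂ := (‖z‖ ^ 2)⁻¹ • z

/-- Rotation by `π/2`: for `a = (a₁, a₂)`, `a^⊥ = (−a₂, a₁)`. -/
noncomputable def perp (a : ℂ) : ℂ := Complex.I * a

/-- The Biot–Savart kernel of the unit disk: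
`K_D(y,z) = (1/(2π)) ((y−z)/|y−z|² − (y−z*)/|y−z*|²)^⊥` for `z ≠ 0`,
with the convention `K_D(y,0) = (1/(2π)) y^⊥/|y|²`. -/
noncomputable def KD (y z : ℂ) : ℂ :=
  if z = 0 then (2 * Real.pi)⁻¹ • perp ((‖y‖ ^ 2)⁻¹ • y)
  else (2 * Real.pi)⁻¹ •
    perp ((‖y - z‖ ^ 2)⁻¹ • (y - z) - (‖y - starInv z‖ ^ 2)⁻¹ • (y - starInv z))

/-- `h(r) = r (1 + |log r|)`, with `h(0) = 0`. -/
noncomputable def h (r : ℝ) : ℝ := r * (1 + |Real.log r|)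

section AuxProof
open MeasureTheory Set

section Polar
open Real


theorem lintegral_comp_polarCoord_symm' (f : ℝ × ℝ → ENNReal) :
    ∫⁻ p in polarCoord.target, ENNReal.ofReal p.1 * f (polarCoord.symm p) = ∫⁻ p, f p := by
  set B : ℝ × ℝ → ℝ × ℝ →L[ℝ] ℝ × ℝ := fun p =>
    LinearMap.toContinuousLinearMap (Matrix.toLin (Module.Basis.finTwoProd ℝ) (Module.Basis.finTwoProd ℝ)
      !![Real.cos p.2, -p.1 * Real.sin p.2; Real.sin p.2, p.1 * Real.cos p.2])
  have A : ∀ p ∈ polarCoord.target, HasFDerivWithinAt polarCoord.symm (B p) polarCoord.target p :=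
    fun p _ => (hasFDerivAt_polarCoord_symm p).hasFDerivWithinAt
  have B_det : ∀ p, (B p).det = p.1 := by
    intro p
    conv_rhs => rw [← one_mul p.1, ← Real.cos_sq_add_sin_sq p.2]
    simp only [B, neg_mul, LinearMap.det_toContinuousLinearMap, LinearMap.det_toLin,
      Matrix.det_fin_two_of, sub_neg_eq_add]
    ring
  symm
  calc
    ∫⁻ p, f p = ∫⁻ p in polarCoord.source, f p := by
      rw [← setLIntegral_univ]
      exact setLIntegral_congr polarCoord_source_ae_eq_univ.symm
    _ = ∫⁻ p in polarCoord.symm '' polarCoord.target, f p := by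
      rw [polarCoord.symm_image_target_eq_source]
    _ = ∫⁻ p in polarCoord.target, ENNReal.ofReal |(B p).det| * f (polarCoord.symm p) := by
      apply lintegral_image_eq_lintegral_abs_det_fderiv_mul volume
        polarCoord.open_target.measurableSet A polarCoord.symm.injOn
    _ = ∫⁻ p in polarCoord.target, ENNReal.ofReal p.1 * f (polarCoord.symm p) := by
      apply setLIntegral_congr_fun polarCoord.open_target.measurableSet
      intro p hp
      dsimp only
      rw [B_det, abs_of_pos hp.1]

theorem lintegral_comp_polarCoord_symm_complex (f : ℂ → ENNReal) :
    ∫⁻ p in polarCoord.target, ENNReal.ofReal p.1 * f (Complex.polarCoord.symm p) = ∫⁻ z, f z := by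
  rw [← (Complex.volume_preserving_equiv_real_prod.symm).lintegral_comp_emb
    Complex.measurableEquivRealProd.symm.measurableEmbedding, ← lintegral_comp_polarCoord_symm']
  rfl

theorem lintegral_radial (f : ℝ → ENNReal) (hf : Measurable f) :
    ∫⁻ z : ℂ, f ‖z‖ = ENNReal.ofReal (2 * π) * ∫⁻ r in Ioi (0:ℝ), ENNReal.ofReal r * f r := by
  rw [← lintegral_comp_polarCoord_symm_complex (fun z => f ‖z‖)]
  have htar : polarCoord.target = Ioi (0:ℝ) ×ˢ Ioo (-π) π := rfl
  have hcongr : ∫⁻ p in polarCoord.target, ENNReal.ofReal p.1 * f ‖Complex.polarCoord.symm p‖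
      = ∫⁻ p in polarCoord.target, ENNReal.ofReal p.1 * f p.1 := by
    apply setLIntegral_congr_fun polarCoord.open_target.measurableSet
    intro p hp
    dsimp only
    rw [Complex.norm_polarCoord_symm, abs_of_pos hp.1]
  rw [hcongr, htar]
  rw [Measure.volume_eq_prod, ← Measure.prod_restrict,
    lintegral_prod (fun p => ENNReal.ofReal p.1 * f p.1)
      ((measurable_fst.ennreal_ofReal.mul (hf.comp measurable_fst)).aemeasurable)]
  simp only [lintegral_const, Measure.restrict_apply, MeasurableSet.univ, univ_inter,
    Real.volume_Ioo]
  have : ∀ x : ℝ, ENNReal.ofReal x * f x * ENNReal.ofReal (π - -π)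
      = ENNReal.ofReal (2 * π) * (ENNReal.ofReal x * f x) := by
    intro x
    rw [mul_comm]
    congr 1
    congr 1
    ring
  simp only [this]
  rw [lintegral_const_mul' _ _ ENNReal.ofReal_ne_top]

lemma lint_ball (ρ : ℝ) (hρ : 0 < ρ) :
    ∫⁻ w in Metric.ball (0:ℂ) ρ, ENNReal.ofReal ‖w‖⁻¹ ≤ ENNReal.ofReal (2 * π * ρ) := by
  set f : ℝ → ENNReal := fun t => if t < ρ then ENNReal.ofReal t⁻¹ else 0 with hf
  have hm : Measurable f := Measurable.ite measurableSet_Iio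
    measurable_inv.ennreal_ofReal measurable_const
  have h1 : ∫⁻ w in Metric.ball (0:ℂ) ρ, ENNReal.ofReal ‖w‖⁻¹ = ∫⁻ w : ℂ, f ‖w‖ := by
    rw [← lintegral_indicator measurableSet_ball]
    congr 1; ext w
    by_cases hw : w ∈ Metric.ball (0:ℂ) ρ
    · have h' : ‖w‖ < ρ := by simpa [Metric.mem_ball, dist_eq_norm] using hw
      rw [indicator_of_mem hw]; simp only [f]; rw [if_pos h']
    · have h' : ¬ ‖w‖ < ρ := by simpa [Metric.mem_ball, dist_eq_norm] using hw
      rw [indicator_of_notMem hw]; simp only [f]; rw [if_neg h']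
  rw [h1, lintegral_radial f hm]
  have h2 : ∫⁻ r in Ioi (0:ℝ), ENNReal.ofReal r * f r
      = ∫⁻ r in Ioi (0:ℝ), indicator (Iio ρ) (fun _ => (1 : ENNReal)) r := by
    apply setLIntegral_congr_fun measurableSet_Ioi
    intro r hr
    by_cases h' : r < ρ
    · rw [indicator_of_mem (show r ∈ Iio ρ from h')]
      simp only [f]; rw [if_pos h']
      rw [← ENNReal.ofReal_mul hr.le, mul_inv_cancel₀ (ne_of_gt hr), ENNReal.ofReal_one]
    · rw [indicator_of_notMem (show r ∉ Iio ρ from h')]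
      simp only [f]; rw [if_neg h', mul_zero]
  rw [h2, lintegral_indicator measurableSet_Iio, Measure.restrict_restrict measurableSet_Iio,
    Set.Iio_inter_Ioi, lintegral_one, Measure.restrict_apply_univ, Real.volume_Ioo,
    ← ENNReal.ofReal_mul (by positivity)]
  simp [sub_zero]

lemma lint_annulus (ε : ℝ) (hε : 0 < ε) (hε2 : ε ≤ 2) :
    ∫⁻ w in Metric.closedBall (0:ℂ) 2 \ Metric.ball 0 ε, ENNReal.ofReal ((‖w‖ * ‖w‖)⁻¹)
      ≤ ENNReal.ofReal (2 * π * (Real.log 2 - Real.log ε)) := by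
  set f : ℝ → ENNReal := fun t => if t ∈ Icc ε 2 then ENNReal.ofReal ((t*t)⁻¹) else 0 with hf
  have hm : Measurable f := Measurable.ite measurableSet_Icc
    ((measurable_id.mul measurable_id).inv.ennreal_ofReal) measurable_const
  have h1 : ∫⁻ w in Metric.closedBall (0:ℂ) 2 \ Metric.ball 0 ε, ENNReal.ofReal ((‖w‖ * ‖w‖)⁻¹)
      = ∫⁻ w : ℂ, f ‖w‖ := by
    rw [← lintegral_indicator (measurableSet_closedBall.diff measurableSet_ball)]
    congr 1; ext w
    by_cases hw : w ∈ Metric.closedBall (0:ℂ) 2 \ Metric.ball 0 ε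
    · have h' : ‖w‖ ∈ Icc ε 2 := by
        constructor
        · simpa [Metric.mem_ball, dist_eq_norm] using hw.2
        · simpa [Metric.mem_closedBall, dist_eq_norm] using hw.1
      rw [indicator_of_mem hw]; simp only [f]; rw [if_pos h']
    · have h' : ‖w‖ ∉ Icc ε 2 := by
        intro hc
        exact hw ⟨by simpa [Metric.mem_closedBall, dist_eq_norm] using hc.2,
          by simpa [Metric.mem_ball, dist_eq_norm] using hc.1⟩
      rw [indicator_of_notMem hw]; simp only [f]; rw [if_neg h']
  rw [h1, lintegral_radial f hm]
  have h2 : ∫⁻ r in Ioi (0:ℝ), ENNReal.ofReal r * f r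
      = ∫⁻ r in Ioi (0:ℝ), indicator (Icc ε 2) (fun t => ENNReal.ofReal t⁻¹) r := by
    apply setLIntegral_congr_fun measurableSet_Ioi
    intro r hr
    by_cases h' : r ∈ Icc ε 2
    · rw [indicator_of_mem h']
      simp only [f]; rw [if_pos h']
      rw [← ENNReal.ofReal_mul hr.le]
      congr 1
      have hr0 : r ≠ 0 := ne_of_gt hr
      field_simp
    · rw [indicator_of_notMem h']
      simp only [f]; rw [if_neg h', mul_zero]
  have hsub : Icc ε 2 ∩ Ioi (0:ℝ) = Icc ε 2 :=
    inter_eq_left.2 (fun t ht => lt_of_lt_of_le hε ht.1)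
  rw [h2, lintegral_indicator measurableSet_Icc, Measure.restrict_restrict measurableSet_Icc,
    hsub]
  have hint : IntegrableOn (fun t : ℝ => t⁻¹) (Icc ε 2) := by
    apply ContinuousOn.integrableOn_compact isCompact_Icc
    exact continuousOn_id.inv₀ (fun t ht => ne_of_gt (lt_of_lt_of_le hε ht.1))
  have h3 : ∫⁻ r in Icc ε 2, ENNReal.ofReal r⁻¹
      = ENNReal.ofReal (∫ r in Icc ε 2, r⁻¹) := by
    rw [← ofReal_integral_eq_lintegral_ofReal hint]
    filter_upwards [ae_restrict_mem measurableSet_Icc] with t ht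
    exact inv_nonneg.2 (le_of_lt (lt_of_lt_of_le hε ht.1))
  have h4 : ∫ r in Icc ε 2, (r:ℝ)⁻¹ = Real.log 2 - Real.log ε := by
    rw [integral_Icc_eq_integral_Ioc, ← intervalIntegral.integral_of_le hε2,
      integral_inv_of_pos hε two_pos, Real.log_div two_ne_zero (ne_of_gt hε)]
  rw [h3, h4, ← ENNReal.ofReal_mul (by positivity)]
end Polar






lemma inv_sq_smul (w : ℂ) : (‖w‖^2)⁻¹ • w = ((starRingEnd ℂ) w)⁻¹ := by
  rcases eq_or_ne w 0 with rfl | hw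
  · simp
  have h2 : ((‖w‖^2 : ℝ) : ℂ) = w * (starRingEnd ℂ) w := by
    rw [Complex.mul_conj]; norm_cast; rw [Complex.normSq_eq_norm_sq]
  rw [Complex.real_smul, Complex.ofReal_inv, h2]
  have hcw : (starRingEnd ℂ) w ≠ 0 := by simpa using hw
  field_simp

lemma key_diff (a b : ℂ) (ha : a ≠ 0) (hb : b ≠ 0) :
    ‖(‖a‖^2)⁻¹ • a - (‖b‖^2)⁻¹ • b‖ = ‖a - b‖ / (‖a‖ * ‖b‖) := by
  rw [inv_sq_smul, inv_sq_smul]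
  have hca : (starRingEnd ℂ) a ≠ 0 := by simpa using ha
  have hcb : (starRingEnd ℂ) b ≠ 0 := by simpa using hb
  rw [inv_sub_inv hca hcb, ← map_sub, norm_div, norm_mul]
  simp only [RCLike.norm_conj]
  rw [norm_sub_rev]

lemma normSq_identity (y z : ℂ) :
    Complex.normSq (y * (starRingEnd ℂ) z - 1) - Complex.normSq (y - z)
      = (1 - Complex.normSq y) * (1 - Complex.normSq z) := by
  simp only [Complex.normSq_apply, Complex.sub_re, Complex.sub_im, Complex.mul_re, Complex.mul_im,
    Complex.conj_re, Complex.conj_im, Complex.one_re, Complex.one_im]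
  ring

lemma norm_le_norm_starInv {y z : ℂ} (hy : ‖y‖ < 1) (hz : ‖z‖ < 1) (hz0 : z ≠ 0) :
    ‖y - z‖ ≤ ‖y - starInv z‖ := by
  have hcz : (starRingEnd ℂ) z ≠ 0 := by simpa using hz0
  have hsz : starInv z = ((starRingEnd ℂ) z)⁻¹ := inv_sq_smul z
  have heq : y - starInv z = (y * (starRingEnd ℂ) z - 1) / (starRingEnd ℂ) z := by
    rw [hsz]; field_simp
  have h1 : ‖y - z‖ ≤ ‖y * (starRingEnd ℂ) z - 1‖ := by
    have hnsq : Complex.normSq (y - z) ≤ Complex.normSq (y * (starRingEnd ℂ) z - 1) := by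
      have := normSq_identity y z
      have hy' : Complex.normSq y < 1 := by
        rw [Complex.normSq_eq_norm_sq]; nlinarith [norm_nonneg y, hy]
      have hz' : Complex.normSq z < 1 := by
        rw [Complex.normSq_eq_norm_sq]; nlinarith [norm_nonneg z, hz]
      nlinarith
    have := Real.sqrt_le_sqrt hnsq
    simpa [Complex.norm_def] using this
  rw [heq, norm_div]
  have hczn : ‖(starRingEnd ℂ) z‖ = ‖z‖ := RCLike.norm_conj z
  rw [hczn]
  have hzpos : 0 < ‖z‖ := norm_pos_iff.2 hz0
  calc ‖y - z‖ ≤ ‖y * (starRingEnd ℂ) z - 1‖ := h1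
    _ ≤ ‖y * (starRingEnd ℂ) z - 1‖ / ‖z‖ := by
        rw [le_div_iff₀ hzpos]; nlinarith [norm_nonneg (y * (starRingEnd ℂ) z - 1)]

lemma KD_bound {y₁ y₂ z : ℂ} (h₁ : ‖y₁‖ < 1) (h₂ : ‖y₂‖ < 1) (hz : ‖z‖ < 1)
    (hz0 : z ≠ 0) (hzy₁ : z ≠ y₁) (hzy₂ : z ≠ y₂) :
    ‖KD y₁ z - KD y₂ z‖ ≤ Real.pi⁻¹ * (‖y₁ - y₂‖ * ((‖z - y₁‖ * ‖z - y₂‖)⁻¹)) := by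
  have hπ : (0:ℝ) < Real.pi := Real.pi_pos
  have ha1 : y₁ - z ≠ 0 := sub_ne_zero.2 (fun hc => hzy₁ hc.symm)
  have ha2 : y₂ - z ≠ 0 := sub_ne_zero.2 (fun hc => hzy₂ hc.symm)
  have hm1 : ‖y₁ - z‖ ≤ ‖y₁ - starInv z‖ := norm_le_norm_starInv h₁ hz hz0
  have hm2 : ‖y₂ - z‖ ≤ ‖y₂ - starInv z‖ := norm_le_norm_starInv h₂ hz hz0
  have hp1 : (0:ℝ) < ‖y₁ - z‖ := norm_pos_iff.2 ha1
  have hp2 : (0:ℝ) < ‖y₂ - z‖ := norm_pos_iff.2 ha2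
  have hb1 : y₁ - starInv z ≠ 0 := norm_pos_iff.1 (lt_of_lt_of_le hp1 hm1)
  have hb2 : y₂ - starInv z ≠ 0 := norm_pos_iff.1 (lt_of_lt_of_le hp2 hm2)
  set A₁ := (‖y₁ - z‖ ^ 2)⁻¹ • (y₁ - z)
  set A₂ := (‖y₂ - z‖ ^ 2)⁻¹ • (y₂ - z)
  set B₁ := (‖y₁ - starInv z‖ ^ 2)⁻¹ • (y₁ - starInv z)
  set B₂ := (‖y₂ - starInv z‖ ^ 2)⁻¹ • (y₂ - starInv z)
  have hKD : KD y₁ z - KD y₂ z = (2 * Real.pi)⁻¹ • (Complex.I * ((A₁ - A₂) - (B₁ - B₂))) := by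
    simp only [KD, if_neg hz0, perp]
    rw [← smul_sub, ← mul_sub]
    congr 1
    ring
  rw [hKD, norm_smul, norm_mul, Complex.norm_I, one_mul, Real.norm_eq_abs,
    abs_of_pos (by positivity)]
  have hA : ‖A₁ - A₂‖ = ‖y₁ - y₂‖ / (‖y₁ - z‖ * ‖y₂ - z‖) := by
    have hk := key_diff (y₁ - z) (y₂ - z) ha1 ha2
    have he : (y₁ - z) - (y₂ - z) = y₁ - y₂ := by ring
    rw [he] at hk
    exact hk
  have hB : ‖B₁ - B₂‖ ≤ ‖y₁ - y₂‖ / (‖y₁ - z‖ * ‖y₂ - z‖) := by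
    have hkey := key_diff (y₁ - starInv z) (y₂ - starInv z) hb1 hb2
    have he : (y₁ - starInv z) - (y₂ - starInv z) = y₁ - y₂ := by ring
    rw [he] at hkey
    rw [show ‖B₁ - B₂‖ = ‖y₁ - y₂‖ / (‖y₁ - starInv z‖ * ‖y₂ - starInv z‖) from hkey]
    have hle : ‖y₁ - z‖ * ‖y₂ - z‖ ≤ ‖y₁ - starInv z‖ * ‖y₂ - starInv z‖ :=
      mul_le_mul hm1 hm2 hp2.le (le_trans hp1.le hm1)
    exact div_le_div_of_nonneg_left (norm_nonneg _) (mul_pos hp1 hp2) hle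
  have htri : ‖(A₁ - A₂) - (B₁ - B₂)‖ ≤ ‖A₁ - A₂‖ + ‖B₁ - B₂‖ := norm_sub_le _ _
  have hd : ‖y₁ - z‖ * ‖y₂ - z‖ = ‖z - y₁‖ * ‖z - y₂‖ := by
    rw [norm_sub_rev y₁ z, norm_sub_rev y₂ z]
  have hc : (0:ℝ) ≤ (2 * Real.pi)⁻¹ := by positivity
  calc (2 * Real.pi)⁻¹ * ‖(A₁ - A₂) - (B₁ - B₂)‖
      ≤ (2 * Real.pi)⁻¹ * (‖A₁ - A₂‖ + ‖B₁ - B₂‖) := mul_le_mul_of_nonneg_left htri hc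
    _ ≤ (2 * Real.pi)⁻¹ * (‖y₁ - y₂‖ / (‖y₁ - z‖ * ‖y₂ - z‖)
          + ‖y₁ - y₂‖ / (‖y₁ - z‖ * ‖y₂ - z‖)) := by
        rw [hA]
        exact mul_le_mul_of_nonneg_left (add_le_add le_rfl hB) hc
    _ = Real.pi⁻¹ * (‖y₁ - y₂‖ * ((‖z - y₁‖ * ‖z - y₂‖)⁻¹)) := by
        rw [← hd]
        field_simp
        ring
lemma measurable_KD (y : ℂ) : Measurable (fun z => KD y z) := by
  unfold KD perp starInv
  refine Measurable.ite (MeasurableSet.singleton 0) measurable_const ?_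
  fun_prop

theorem main_bound (y₁ y₂ : ℂ) (hy₁ : y₁ ∈ Metric.ball (0 : ℂ) 1)
    (hy₂ : y₂ ∈ Metric.ball (0 : ℂ) 1) :
    ∫ z in Metric.ball (0 : ℂ) 1, ‖KD y₁ z - KD y₂ z‖ ≤ 10 * h ‖y₁ - y₂‖ := by
  have h₁ : ‖y₁‖ < 1 := by simpa [Metric.mem_ball, dist_eq_norm] using hy₁
  have h₂ : ‖y₂‖ < 1 := by simpa [Metric.mem_ball, dist_eq_norm] using hy₂
  set r : ℝ := ‖y₁ - y₂‖ with hr_def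
  rcases eq_or_lt_of_le (norm_nonneg (y₁ - y₂)) with hr0 | hr0
  · -- y₁ = y₂
    have : y₁ = y₂ := by
      have := norm_sub_eq_zero_iff.1 hr0.symm
      exact this
    subst this
    simp [h, hr_def]
  -- now 0 < r
  have hπ : (0 : ℝ) < Real.pi := Real.pi_pos
  have hr2 : r < 2 := by
    calc r ≤ ‖y₁‖ + ‖y₂‖ := norm_sub_le _ _
      _ < 2 := by linarith
  set ε : ℝ := r / 2 with hε_def
  have hε : 0 < ε := by positivity
  have hε2 : ε ≤ 2 := by simp only [hε_def]; linarith
  set D := Metric.ball (0 : ℂ) 1 with hD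
  set F₁ : ℂ → ENNReal := fun w =>
    indicator (Metric.ball (0:ℂ) ε) (fun w => ENNReal.ofReal ((2/r) * ‖w‖⁻¹)) w with hF₁
  set F₃ : ℂ → ENNReal := fun w =>
    indicator (Metric.closedBall (0:ℂ) 2 \ Metric.ball 0 ε)
      (fun w => ENNReal.ofReal (2⁻¹ * (‖w‖ * ‖w‖)⁻¹)) w with hF₃
  set T : ℂ → ENNReal := fun z => F₁ (z - y₁) + F₁ (z - y₂) + F₃ (z - y₁) + F₃ (z - y₂) with hT
  -- pointwise domination of (u v)⁻¹ by T
  have claimB : ∀ z : ℂ, ‖z‖ < 1 →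
      ENNReal.ofReal ((‖z - y₁‖ * ‖z - y₂‖)⁻¹) ≤ T z := by
    intro z hz
    set u := ‖z - y₁‖ with hu_def
    set v := ‖z - y₂‖ with hv_def
    have hu0 : 0 ≤ u := norm_nonneg _
    have hv0 : 0 ≤ v := norm_nonneg _
    have hu2 : u ≤ 2 := by
      calc u ≤ ‖z‖ + ‖y₁‖ := norm_sub_le _ _
        _ ≤ 2 := by linarith
    have hv2 : v ≤ 2 := by
      calc v ≤ ‖z‖ + ‖y₂‖ := norm_sub_le _ _
        _ ≤ 2 := by linarith
    have hsum : r ≤ u + v := by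
      calc r = ‖(y₁ - z) + (z - y₂)‖ := by rw [hr_def]; congr 1; ring
        _ ≤ ‖y₁ - z‖ + ‖z - y₂‖ := norm_add_le _ _
        _ = u + v := by rw [norm_sub_rev y₁ z]
    by_cases hu : u < ε
    · have hv : ε ≤ v := by
        simp only [hε_def] at hu ⊢; linarith
      have hmem : z - y₁ ∈ Metric.ball (0:ℂ) ε := by
        simpa [Metric.mem_ball, dist_eq_norm] using hu
      have hreal : (u * v)⁻¹ ≤ (2/r) * u⁻¹ := by
        rcases eq_or_lt_of_le hu0 with hu0' | hu0'
        · rw [← hu0', zero_mul, inv_zero]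
          positivity
        · rw [mul_inv]
          have hvinv : v⁻¹ ≤ 2 / r := by
            rw [hε_def] at hv
            have h1 : v⁻¹ ≤ (r/2)⁻¹ := by
              apply inv_anti₀ (by linarith) hv
            simpa [inv_div] using h1
          calc u⁻¹ * v⁻¹ ≤ u⁻¹ * (2/r) := by
                exact mul_le_mul_of_nonneg_left hvinv (by positivity)
            _ = (2/r) * u⁻¹ := by ring
      calc ENNReal.ofReal ((u * v)⁻¹) ≤ ENNReal.ofReal ((2/r) * u⁻¹) :=
            ENNReal.ofReal_le_ofReal hreal
        _ = F₁ (z - y₁) := by simp only [hF₁]; rw [indicator_of_mem hmem]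
        _ ≤ T z := by
            rw [hT]
            calc F₁ (z - y₁) ≤ F₁ (z - y₁) + F₁ (z - y₂) := le_self_add
              _ ≤ F₁ (z - y₁) + F₁ (z - y₂) + F₃ (z - y₁) := le_self_add
              _ ≤ _ := le_self_add
    · by_cases hv : v < ε
      · have hu' : ε ≤ u := le_of_not_gt hu
        have hmem : z - y₂ ∈ Metric.ball (0:ℂ) ε := by
          simpa [Metric.mem_ball, dist_eq_norm] using hv
        have hreal : (u * v)⁻¹ ≤ (2/r) * v⁻¹ := by
          rcases eq_or_lt_of_le hv0 with hv0' | hv0'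
          · rw [← hv0', mul_zero, inv_zero]
            positivity
          · rw [mul_inv]
            have huinv : u⁻¹ ≤ 2 / r := by
              rw [hε_def] at hu'
              have h1 : u⁻¹ ≤ (r/2)⁻¹ := by
                apply inv_anti₀ (by linarith) hu'
              simpa [inv_div] using h1
            calc u⁻¹ * v⁻¹ ≤ (2/r) * v⁻¹ := by
                  exact mul_le_mul_of_nonneg_right huinv (by positivity)
              _ = (2/r) * v⁻¹ := rfl
        calc ENNReal.ofReal ((u * v)⁻¹) ≤ ENNReal.ofReal ((2/r) * v⁻¹) :=
              ENNReal.ofReal_le_ofReal hreal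
          _ = F₁ (z - y₂) := by simp only [hF₁]; rw [indicator_of_mem hmem]
          _ ≤ T z := by
              rw [hT]
              calc F₁ (z - y₂) ≤ F₁ (z - y₁) + F₁ (z - y₂) := le_add_self
                _ ≤ F₁ (z - y₁) + F₁ (z - y₂) + F₃ (z - y₁) := le_self_add
                _ ≤ _ := le_self_add
      · have hu' : ε ≤ u := le_of_not_gt hu
        have hv' : ε ≤ v := le_of_not_gt hv
        have hup : 0 < u := lt_of_lt_of_le hε hu'
        have hvp : 0 < v := lt_of_lt_of_le hε hv'
        have hmem1 : z - y₁ ∈ Metric.closedBall (0:ℂ) 2 \ Metric.ball 0 ε := by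
          constructor
          · simpa [Metric.mem_closedBall, dist_eq_norm] using hu2
          · simpa [Metric.mem_ball, dist_eq_norm] using not_lt.2 hu'
        have hmem2 : z - y₂ ∈ Metric.closedBall (0:ℂ) 2 \ Metric.ball 0 ε := by
          constructor
          · simpa [Metric.mem_closedBall, dist_eq_norm] using hv2
          · simpa [Metric.mem_ball, dist_eq_norm] using not_lt.2 hv'
        have hreal : (u * v)⁻¹ ≤ 2⁻¹ * (u * u)⁻¹ + 2⁻¹ * (v * v)⁻¹ := by
          have hkey : 2⁻¹ * (u * u)⁻¹ + 2⁻¹ * (v * v)⁻¹ - (u * v)⁻¹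
              = (u - v)^2 / (2 * u^2 * v^2) := by
            field_simp
            ring
          nlinarith [sq_nonneg (u - v), sq_nonneg u, sq_nonneg v,
            div_nonneg (sq_nonneg (u - v)) (by positivity : (0:ℝ) ≤ 2 * u^2 * v^2)]
        calc ENNReal.ofReal ((u * v)⁻¹)
            ≤ ENNReal.ofReal (2⁻¹ * (u * u)⁻¹ + 2⁻¹ * (v * v)⁻¹) :=
              ENNReal.ofReal_le_ofReal hreal
          _ ≤ ENNReal.ofReal (2⁻¹ * (u * u)⁻¹) + ENNReal.ofReal (2⁻¹ * (v * v)⁻¹) :=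
              ENNReal.ofReal_add_le
          _ = F₃ (z - y₁) + F₃ (z - y₂) := by
              simp only [hF₃]
              rw [indicator_of_mem hmem1, indicator_of_mem hmem2]
          _ ≤ T z := by
              rw [hT]
              calc F₃ (z - y₁) + F₃ (z - y₂)
                  ≤ F₁ (z - y₁) + F₁ (z - y₂) + (F₃ (z - y₁) + F₃ (z - y₂)) := le_add_self
                _ = F₁ (z - y₁) + F₁ (z - y₂) + F₃ (z - y₁) + F₃ (z - y₂) := by
                    abel
  -- a.e. pointwise bound over D
  have hae : ∀ᵐ z ∂(volume.restrict D),
      ENNReal.ofReal ‖KD y₁ z - KD y₂ z‖ ≤ ENNReal.ofReal (Real.pi⁻¹ * r) * T z := by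
    have hexc : ∀ᵐ z : ℂ, z ≠ 0 ∧ z ≠ y₁ ∧ z ≠ y₂ := by
      have e0 : ∀ᵐ z : ℂ, z ≠ 0 := by
        refine ae_iff.2 ?_
        have : {z : ℂ | ¬ z ≠ 0} = {0} := by ext z; simp
        rw [this]
        exact measure_singleton 0
      have e1 : ∀ᵐ z : ℂ, z ≠ y₁ := by
        refine ae_iff.2 ?_
        have : {z : ℂ | ¬ z ≠ y₁} = {y₁} := by ext z; simp
        rw [this]
        exact measure_singleton y₁
      have e2 : ∀ᵐ z : ℂ, z ≠ y₂ := by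
        refine ae_iff.2 ?_
        have : {z : ℂ | ¬ z ≠ y₂} = {y₂} := by ext z; simp
        rw [this]
        exact measure_singleton y₂
      filter_upwards [e0, e1, e2] with z hz0 hz1 hz2
      exact ⟨hz0, hz1, hz2⟩
    filter_upwards [ae_restrict_of_ae hexc, ae_restrict_mem (by
      rw [hD]; exact Metric.isOpen_ball.measurableSet)] with z hz hzD
    have hzn : ‖z‖ < 1 := by
      rw [hD] at hzD
      simpa [Metric.mem_ball, dist_eq_norm] using hzD
    have hb := KD_bound h₁ h₂ hzn hz.1 hz.2.1 hz.2.2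
    calc ENNReal.ofReal ‖KD y₁ z - KD y₂ z‖
        ≤ ENNReal.ofReal (Real.pi⁻¹ * (r * ((‖z - y₁‖ * ‖z - y₂‖)⁻¹))) :=
          ENNReal.ofReal_le_ofReal hb
      _ = ENNReal.ofReal (Real.pi⁻¹ * r) * ENNReal.ofReal ((‖z - y₁‖ * ‖z - y₂‖)⁻¹) := by
          rw [← ENNReal.ofReal_mul (by positivity)]
          ring_nf
      _ ≤ ENNReal.ofReal (Real.pi⁻¹ * r) * T z :=
          mul_le_mul_right (claimB z hzn) _
  -- measurability of the pieces
  have hmF₁ : Measurable F₁ := by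
    rw [hF₁]
    exact Measurable.indicator
      ((measurable_norm.inv.const_mul _).ennreal_ofReal) Metric.isOpen_ball.measurableSet
  have hmF₃ : Measurable F₃ := by
    rw [hF₃]
    exact Measurable.indicator
      (((measurable_norm.mul measurable_norm).inv.const_mul _).ennreal_ofReal)
      (measurableSet_closedBall.diff Metric.isOpen_ball.measurableSet)
  have hc1 : Measurable (fun z : ℂ => F₁ (z - y₁)) := hmF₁.comp (measurable_id.sub_const y₁)
  have hc2 : Measurable (fun z : ℂ => F₁ (z - y₂)) := hmF₁.comp (measurable_id.sub_const y₂)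
  have hc3 : Measurable (fun z : ℂ => F₃ (z - y₁)) := hmF₃.comp (measurable_id.sub_const y₁)
  have hc4 : Measurable (fun z : ℂ => F₃ (z - y₂)) := hmF₃.comp (measurable_id.sub_const y₂)
  -- lintegral of the pieces
  have hI₁ : ∀ y : ℂ, ∫⁻ z : ℂ, F₁ (z - y) ≤ ENNReal.ofReal ((2/r) * (2 * Real.pi * ε)) := by
    intro y
    have htrans : ∫⁻ z : ℂ, F₁ (z - y) = ∫⁻ w : ℂ, F₁ w := by
      simp_rw [sub_eq_add_neg]
      exact lintegral_add_right_eq_self F₁ (-y)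
    rw [htrans, hF₁, lintegral_indicator Metric.isOpen_ball.measurableSet]
    have : ∀ w : ℂ, ENNReal.ofReal ((2/r) * ‖w‖⁻¹)
        = ENNReal.ofReal (2/r) * ENNReal.ofReal (‖w‖⁻¹) := by
      intro w; rw [← ENNReal.ofReal_mul (by positivity)]
    simp_rw [this]
    rw [lintegral_const_mul' _ _ ENNReal.ofReal_ne_top]
    calc ENNReal.ofReal (2/r) * ∫⁻ w in Metric.ball (0:ℂ) ε, ENNReal.ofReal (‖w‖⁻¹)
        ≤ ENNReal.ofReal (2/r) * ENNReal.ofReal (2 * Real.pi * ε) :=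
          mul_le_mul_right (lint_ball ε hε) _
      _ = ENNReal.ofReal ((2/r) * (2 * Real.pi * ε)) := by
          rw [← ENNReal.ofReal_mul (by positivity)]
  have hI₃ : ∀ y : ℂ, ∫⁻ z : ℂ, F₃ (z - y)
      ≤ ENNReal.ofReal (2⁻¹ * (2 * Real.pi * (Real.log 2 - Real.log ε))) := by
    intro y
    have htrans : ∫⁻ z : ℂ, F₃ (z - y) = ∫⁻ w : ℂ, F₃ w := by
      simp_rw [sub_eq_add_neg]
      exact lintegral_add_right_eq_self F₃ (-y)
    rw [htrans, hF₃, lintegral_indicator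
      (measurableSet_closedBall.diff Metric.isOpen_ball.measurableSet)]
    have : ∀ w : ℂ, ENNReal.ofReal (2⁻¹ * (‖w‖ * ‖w‖)⁻¹)
        = ENNReal.ofReal 2⁻¹ * ENNReal.ofReal ((‖w‖ * ‖w‖)⁻¹) := by
      intro w; rw [← ENNReal.ofReal_mul (by positivity)]
    simp_rw [this]
    rw [lintegral_const_mul' _ _ ENNReal.ofReal_ne_top]
    have hL : 0 ≤ Real.log 2 - Real.log ε := by
      have := Real.log_le_log hε hε2
      linarith
    calc ENNReal.ofReal 2⁻¹ * ∫⁻ w in Metric.closedBall (0:ℂ) 2 \ Metric.ball 0 ε,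
          ENNReal.ofReal ((‖w‖ * ‖w‖)⁻¹)
        ≤ ENNReal.ofReal 2⁻¹ * ENNReal.ofReal (2 * Real.pi * (Real.log 2 - Real.log ε)) :=
          mul_le_mul_right (lint_annulus ε hε hε2) _
      _ = ENNReal.ofReal (2⁻¹ * (2 * Real.pi * (Real.log 2 - Real.log ε))) := by
          rw [← ENNReal.ofReal_mul (by positivity)]
  -- total lintegral bound
  set L : ℝ := Real.log 2 - Real.log ε with hL_def
  have hL0 : 0 ≤ L := by
    have := Real.log_le_log hε hε2
    simp only [hL_def]; linarith
  have hTbound : ∫⁻ z : ℂ, T z ≤ ENNReal.ofReal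
      ((2/r) * (2 * Real.pi * ε) + (2/r) * (2 * Real.pi * ε)
        + (2⁻¹ * (2 * Real.pi * L) + 2⁻¹ * (2 * Real.pi * L))) := by
    have hsplit : ∫⁻ z : ℂ, T z = (∫⁻ z : ℂ, F₁ (z - y₁)) + (∫⁻ z : ℂ, F₁ (z - y₂))
        + ((∫⁻ z : ℂ, F₃ (z - y₁)) + (∫⁻ z : ℂ, F₃ (z - y₂))) := by
      rw [hT]
      simp_rw [add_assoc]
      rw [lintegral_add_left hc1, lintegral_add_left hc2, lintegral_add_left hc3]
    rw [hsplit]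
    have hA0 : 0 ≤ (2/r) * (2 * Real.pi * ε) := by positivity
    have hB0 : 0 ≤ 2⁻¹ * (2 * Real.pi * L) :=
      mul_nonneg (by norm_num) (mul_nonneg (by positivity) hL0)
    rw [ENNReal.ofReal_add (add_nonneg hA0 hA0) (add_nonneg hB0 hB0),
      ENNReal.ofReal_add hA0 hA0, ENNReal.ofReal_add hB0 hB0]
    exact add_le_add (add_le_add (hI₁ y₁) (hI₁ y₂)) (add_le_add (hI₃ y₁) (hI₃ y₂))
  have hmain : ∫⁻ z in D, ENNReal.ofReal ‖KD y₁ z - KD y₂ z‖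
      ≤ ENNReal.ofReal (10 * h r) := by
    calc ∫⁻ z in D, ENNReal.ofReal ‖KD y₁ z - KD y₂ z‖
        ≤ ∫⁻ z in D, ENNReal.ofReal (Real.pi⁻¹ * r) * T z := lintegral_mono_ae hae
      _ = ENNReal.ofReal (Real.pi⁻¹ * r) * ∫⁻ z in D, T z :=
          lintegral_const_mul' _ _ ENNReal.ofReal_ne_top
      _ ≤ ENNReal.ofReal (Real.pi⁻¹ * r) * ∫⁻ z : ℂ, T z :=
          mul_le_mul_right (setLIntegral_le_lintegral _ _) _
      _ ≤ ENNReal.ofReal (Real.pi⁻¹ * r) * ENNReal.ofReal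
            ((2/r) * (2 * Real.pi * ε) + (2/r) * (2 * Real.pi * ε)
              + (2⁻¹ * (2 * Real.pi * L) + 2⁻¹ * (2 * Real.pi * L))) :=
          mul_le_mul_right hTbound _
      _ = ENNReal.ofReal (Real.pi⁻¹ * r * ((2/r) * (2 * Real.pi * ε) + (2/r) * (2 * Real.pi * ε)
              + (2⁻¹ * (2 * Real.pi * L) + 2⁻¹ * (2 * Real.pi * L)))) := by
          rw [← ENNReal.ofReal_mul (by positivity)]
      _ ≤ ENNReal.ofReal (10 * h r) := by
          apply ENNReal.ofReal_le_ofReal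
          have hεval : ε = r / 2 := hε_def
          have hLval : L = Real.log 2 - Real.log ε := hL_def
          have hlogε : Real.log ε = Real.log r - Real.log 2 := by
            rw [hεval, Real.log_div (ne_of_gt hr0) (by norm_num)]
          have hlog2 : Real.log 2 ≤ 1 := by
            have := Real.log_le_sub_one_of_pos (by norm_num : (0:ℝ) < 2)
            linarith
          have habs : -Real.log r ≤ |Real.log r| := neg_le_abs _
          have habs0 : 0 ≤ |Real.log r| := abs_nonneg _
          have hexp : Real.pi⁻¹ * r * ((2/r) * (2 * Real.pi * ε) + (2/r) * (2 * Real.pi * ε)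
              + (2⁻¹ * (2 * Real.pi * L) + 2⁻¹ * (2 * Real.pi * L)))
              = r * (4 + 2 * L) := by
            rw [hεval]
            have hr0' : r ≠ 0 := ne_of_gt hr0
            field_simp
            ring
          rw [hexp, h]
          have hLeq : L = 2 * Real.log 2 - Real.log r := by
            rw [hLval, hlogε]; ring
          rw [hLeq]
          nlinarith [hr0, hlog2, habs, habs0]
  -- conclusion
  have hnn : 0 ≤ᵐ[volume.restrict D] fun z => ‖KD y₁ z - KD y₂ z‖ :=
    Filter.Eventually.of_forall (fun z => norm_nonneg _)
  have hsm : AEStronglyMeasurable (fun z => ‖KD y₁ z - KD y₂ z‖) (volume.restrict D) :=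
    (((measurable_KD y₁).sub (measurable_KD y₂)).norm).aestronglyMeasurable
  rw [integral_eq_lintegral_of_nonneg_ae hnn hsm]
  have hhr : 0 ≤ 10 * h r := by
    rw [h]
    have : 0 ≤ 1 + |Real.log r| := by positivity
    nlinarith
  exact ENNReal.toReal_le_of_le_ofReal hhr hmain


end AuxProof

/-- There is `C > 0` with `∫_D |K_D(y₁,z) − K_D(y₂,z)| dz ≤ C h(|y₁ − y₂|)`
for all `y₁, y₂` in the open unit disk. -/
theorem integral_KD_sub_le :
    ∃ C : ℝ, 0 < C ∧ ∀ y₁ ∈ Metric.ball (0 : ℂ) 1, ∀ y₂ ∈ Metric.ball (0 : ℂ) 1,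
      ∫ z in Metric.ball (0 : ℂ) 1, ‖KD y₁ z - KD y₂ z‖ ≤ C * h ‖y₁ - y₂‖ := by
  exact ⟨10, by norm_num, fun y₁ hy₁ y₂ hy₂ => main_bound y₁ y₂ hy₁ hy₂⟩
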